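/- (Corollary 3.2(c).) If S is independent of (R(1),R(0)), then theta_sfe = theta_obs, i.e., Lambda^{-1} E[(E[R(1)Y(1)|S] E[R(0)|S] - E[R(0)Y(0)|S] E[R(1)|S]) / (nu E[R(1)|S] + (1-nu) E[R(0)|S])] = E[R(1)Y(1)]/E[R(1)] - E[R(0)Y(0)]/E[R(0)]. -/

import Mathlib

open MeasureTheory ProbabilityTheory

/-- Corollary 3.2(c): if `S` is independent of `(R(1), R(0))`, then `θ_sfe = θ_obs`, i.e.
`Λ⁻¹ E[(E[R(1)Y(1)|S] E[R(0)|S] - E[R(0)Y(0)|S] E[R(1)|S]) / (ν E[R(1)|S] + (1-ν) E[R(0)|S])]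
  = E[R(1)Y(1)]/E[R(1)] - E[R(0)Y(0)]/E[R(0)]`.
Here `q d` and `qy d` are versions of `E[R(d)|S=·]` and `E[R(d)Y(d)|S=·]`. -/
theorem corollary_3_2_c
    {Ω : Type*} [MeasurableSpace Ω] (μ : Measure Ω) [IsProbabilityMeasure μ]
    {𝒮 : Type*} [Fintype 𝒮] [MeasurableSpace 𝒮] [MeasurableSingletonClass 𝒮]
    (Y : Fin 2 → Ω → ℝ) (R : Fin 2 → Ω → ℝ) (S : Ω → 𝒮)
    (hYmeas : ∀ d, Measurable (Y d)) (hRmeas : ∀ d, Measurable (R d))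
    (hSmeas : Measurable S)
    (hR01 : ∀ d ω, R d ω = 0 ∨ R d ω = 1)
    (hYint : ∀ d, Integrable (Y d) μ)
    (hRpos : ∀ d, 0 < ∫ ω, R d ω ∂μ)
    (ν : ℝ) (hν : 0 < ν ∧ ν < 1)
    (q : Fin 2 → 𝒮 → ℝ) (qy : Fin 2 → 𝒮 → ℝ)
    (hq : ∀ d, μ[R d | MeasurableSpace.comap S inferInstance]
      =ᵐ[μ] fun ω => q d (S ω))
    (hqy : ∀ d, μ[fun ω => R d ω * Y d ω | MeasurableSpace.comap S inferInstance]
      =ᵐ[μ] fun ω => qy d (S ω))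
    (Λ : ℝ)
    (hΛ : Λ = ∫ ω, q 1 (S ω) * q 0 (S ω) / (ν * q 1 (S ω) + (1 - ν) * q 0 (S ω)) ∂μ)
    (hΛpos : 0 < Λ)
    (hindep : IndepFun S (fun ω => (R 1 ω, R 0 ω)) μ) :
    Λ⁻¹ * ∫ ω, (qy 1 (S ω) * q 0 (S ω) - qy 0 (S ω) * q 1 (S ω))
        / (ν * q 1 (S ω) + (1 - ν) * q 0 (S ω)) ∂μ
      = (∫ ω, R 1 ω * Y 1 ω ∂μ) / (∫ ω, R 1 ω ∂μ)
        - (∫ ω, R 0 ω * Y 0 ω ∂μ) / (∫ ω, R 0 ω ∂μ) := by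
  obtain ⟨hν0, hν1⟩ := hν
  have hm : MeasurableSpace.comap S inferInstance ≤ ‹MeasurableSpace Ω› := hSmeas.comap_le
  have hRYint : ∀ d, Integrable (fun ω => R d ω * Y d ω) μ := by
    intro d
    refine (hYint d).norm.mono' ((hRmeas d).mul (hYmeas d)).aestronglyMeasurable ?_
    filter_upwards with ω
    rw [norm_mul]
    rcases hR01 d ω with h | h <;> simp [h]
  set r : Fin 2 → ℝ := fun d => ∫ ω, R d ω ∂μ with hr_def
  -- independence implies the conditional expectation of R d given S is constant
  have hconst : ∀ d, (fun ω => q d (S ω)) =ᵐ[μ] fun _ => r d := by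
    intro d
    refine (hq d).symm.trans ?_
    have hle₁ : MeasurableSpace.comap (fun ω => (R 1 ω, R 0 ω)) inferInstance
        ≤ ‹MeasurableSpace Ω› := ((hRmeas 1).prodMk (hRmeas 0)).comap_le
    have hindp : Indep (MeasurableSpace.comap (fun ω => (R 1 ω, R 0 ω)) inferInstance)
        (MeasurableSpace.comap S inferInstance) μ := hindep.symm
    fin_cases d
    · exact condExp_indep_eq hle₁ hm
        ((measurable_snd.comp
          (comap_measurable (fun ω => (R 1 ω, R 0 ω)))).stronglyMeasurable)
        hindp
    · exact condExp_indep_eq hle₁ hm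
        ((measurable_fst.comp
          (comap_measurable (fun ω => (R 1 ω, R 0 ω)))).stronglyMeasurable)
        hindp
  have hr1 : 0 < r 1 := hRpos 1
  have hr0 : 0 < r 0 := hRpos 0
  set c : ℝ := ν * r 1 + (1 - ν) * r 0 with hc_def
  have hc : 0 < c := by
    have h1 := mul_pos hν0 hr1
    have h2 := mul_pos (by linarith : (0:ℝ) < 1 - ν) hr0
    rw [hc_def]; linarith
  -- integrability and integral of qy d ∘ S
  have hqyInt : ∀ d, Integrable (fun ω => qy d (S ω)) μ :=
    fun d => integrable_condExp.congr (hqy d)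
  have hqyEq : ∀ d, ∫ ω, qy d (S ω) ∂μ = ∫ ω, R d ω * Y d ω ∂μ := by
    intro d
    rw [integral_congr_ae (hqy d).symm, integral_condExp hm]
  -- Λ equals r1 r0 / c
  have hΛval : Λ = r 1 * r 0 / c := by
    rw [hΛ]
    have : (fun ω => q 1 (S ω) * q 0 (S ω) / (ν * q 1 (S ω) + (1 - ν) * q 0 (S ω)))
        =ᵐ[μ] fun _ => r 1 * r 0 / c := by
      filter_upwards [hconst 1, hconst 0] with ω h1 h0
      rw [h1, h0]
    rw [integral_congr_ae this, integral_const, probReal_univ, one_smul]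
  -- the main integral
  have hmain : ∫ ω, (qy 1 (S ω) * q 0 (S ω) - qy 0 (S ω) * q 1 (S ω))
      / (ν * q 1 (S ω) + (1 - ν) * q 0 (S ω)) ∂μ
      = ((∫ ω, R 1 ω * Y 1 ω ∂μ) * r 0 - (∫ ω, R 0 ω * Y 0 ω ∂μ) * r 1) * c⁻¹ := by
    have heq : (fun ω => (qy 1 (S ω) * q 0 (S ω) - qy 0 (S ω) * q 1 (S ω))
        / (ν * q 1 (S ω) + (1 - ν) * q 0 (S ω)))
        =ᵐ[μ] fun ω => (qy 1 (S ω) * r 0 - qy 0 (S ω) * r 1) * c⁻¹ := by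
      filter_upwards [hconst 1, hconst 0] with ω h1 h0
      rw [h1, h0, div_eq_mul_inv]
    rw [integral_congr_ae heq, integral_mul_const,
      integral_sub ((hqyInt 1).mul_const _) ((hqyInt 0).mul_const _),
      integral_mul_const, integral_mul_const, hqyEq 1, hqyEq 0]
  rw [hmain, hΛval]
  have h1 : r 1 ≠ 0 := ne_of_gt hr1
  have h0 : r 0 ≠ 0 := ne_of_gt hr0
  have hc' : c ≠ 0 := ne_of_gt hc
  show (r 1 * r 0 / c)⁻¹ * (((∫ ω, R 1 ω * Y 1 ω ∂μ) * r 0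
      - (∫ ω, R 0 ω * Y 0 ω ∂μ) * r 1) * c⁻¹)
    = (∫ ω, R 1 ω * Y 1 ω ∂μ) / r 1 - (∫ ω, R 0 ω * Y 0 ω ∂μ) / r 0
  field_simp
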